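/- For a graph G with terminals x, y and xy ∉ E(G): the underlying unlabeled graph of G⁺ = G + xy is critical for Euler genus if and only if G is ĝ⁺-critical, θ(G) > 0, and ĝ(G/xy) < ĝ⁺(G). -/

import Mathlib

open scoped Classical

namespace GenusPaper

variable {V : Type}

/-- Identify vertex `v` with vertex `u`: all edges incident with `v` are transferred
to `u`, and `v` becomes isolated; multiple edges are implicitly simplified.
When `u` and `v` are adjacent this is contraction of the edge `uv`. -/
def contractPair (G : SimpleGraph V) (u v : V) : SimpleGraph V where
  Adj a b := a ≠ b ∧ ∃ a' b' : V,
    (if a' = v then u else a') = a ∧ (if b' = v then u else b') = b ∧ G.Adj a' b'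
  symm := ⟨by
    rintro a b ⟨h, a', b', ha, hb, hadj⟩
    exact ⟨h.symm, b', a', hb, ha, hadj.symm⟩⟩
  loopless := ⟨by rintro a ⟨h, -⟩; exact h rfl⟩

/-- A (cellular) embedding of `G` into a surface, given combinatorially by a rotation
system together with a signature.  `rot` fixes the tail of each dart and acts as a single
cyclic rotation on the darts based at each vertex; `sign` is the edge signature. -/
structure Emb (G : SimpleGraph V) where
  rot : Equiv.Perm G.Dart
  sign : G.Dart → Bool
  rot_fst : ∀ d : G.Dart, (rot d).toProd.1 = d.toProd.1
  rot_cyclic : ∀ d d' : G.Dart, d.toProd.1 = d'.toProd.1 → ∃ n : ℕ, (rot ^ n) d = d'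
  sign_symm : ∀ d : G.Dart, sign d.symm = sign d

/-- The face-tracing map on flags (darts with a current sign). -/
def Emb.faceNext {G : SimpleGraph V} (E : Emb G) (p : G.Dart × Bool) : G.Dart × Bool :=
  (if xor p.2 (E.sign p.1) then E.rot p.1.symm else E.rot.symm p.1.symm,
    xor p.2 (E.sign p.1))

/-- Number of orbits of the face-tracing map; each face is traced twice. -/
noncomputable def Emb.faceCount {G : SimpleGraph V} (E : Emb G) : ℕ :=
  Nat.card (Quot fun p q : G.Dart × Bool => E.faceNext p = q)

/-- Euler genus of an embedding, via Euler's formula (summed over the connected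
components of the graph; isolated vertices are discarded). -/
noncomputable def Emb.genus {G : SimpleGraph V} (E : Emb G) : ℤ :=
  2 * (Nat.card (G.induce G.support).ConnectedComponent : ℤ)
    - (Nat.card G.support : ℤ) + (Nat.card G.edgeSet : ℤ)
    - ((E.faceCount / 2 : ℕ) : ℤ)

/-- The Euler genus of a graph: minimum Euler genus over all embeddings. -/
noncomputable def eulerGenus (G : SimpleGraph V) : ℕ :=
  sInf {n : ℕ | ∃ E : Emb G, E.genus = (n : ℤ)}

/-- An embedding is orientable iff its signature is switching-equivalent to the trivial
one, i.e. there is no cycle with an odd number of negative edges. -/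
def Emb.Orientable {G : SimpleGraph V} (E : Emb G) : Prop :=
  ∃ f : V → Bool, ∀ d : G.Dart, E.sign d = xor (f d.toProd.1) (f d.toProd.2)

/-- Nonorientable genus: minimum Euler genus over nonorientable embeddings. -/
noncomputable def nonorientableGenus (G : SimpleGraph V) : ℕ :=
  sInf {n : ℕ | ∃ E : Emb G, ¬ E.Orientable ∧ E.genus = (n : ℤ)}

/-- Orientable genus: half the minimum Euler genus over orientable embeddings. -/
noncomputable def orientableGenus (G : SimpleGraph V) : ℕ :=
  sInf {n : ℕ | ∃ E : Emb G, E.Orientable ∧ E.genus = (n : ℤ)} / 2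

/-- `G⁺ = G + xy`. -/
def addEdge (G : SimpleGraph V) (x y : V) : SimpleGraph V :=
  G ⊔ SimpleGraph.fromEdgeSet {s(x, y)}

/-- `ĝ⁺(G) = ĝ(G + xy)`. -/
noncomputable def egp (G : SimpleGraph V) (x y : V) : ℕ := eulerGenus (addEdge G x y)

/-- `σ(H) = ĝ̃(H) − ĝ(H)`; equals 1 iff `H` is orientably simple. -/
noncomputable def sigma (H : SimpleGraph V) : ℕ := nonorientableGenus H - eulerGenus H

/-- A minor-operation: deletion or contraction of an edge. -/
inductive MinorOp (V : Type) : Type where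
  | del : V → V → MinorOp V
  | con : V → V → MinorOp V

/-- Applying a minor-operation to a graph (without terminals). -/
def MinorOp.apply (μ : MinorOp V) (G : SimpleGraph V) : SimpleGraph V :=
  match μ with
  | .del u v => G.deleteEdges {s(u, v)}
  | .con u v => contractPair G u v

/-- Applying a minor-operation to a graph with terminals `x, y`: when contracting an
edge incident with a terminal, the resulting vertex is the terminal. -/
noncomputable def MinorOp.applyT (μ : MinorOp V) (G : SimpleGraph V) (x y : V) : SimpleGraph V :=
  match μ with
  | .del u v => G.deleteEdges {s(u, v)}
  | .con u v => if v = x ∨ v = y then contractPair G v u else contractPair G u v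

/-- Availability of a minor-operation for a graph without terminals. -/
def MinorOp.Valid (μ : MinorOp V) (G : SimpleGraph V) : Prop :=
  match μ with
  | .del u v => G.Adj u v
  | .con u v => G.Adj u v

/-- Availability of a minor-operation for a graph with terminals `x, y`:
the edge `xy` may not be contracted. -/
def MinorOp.ValidT (μ : MinorOp V) (G : SimpleGraph V) (x y : V) : Prop :=
  match μ with
  | .del u v => G.Adj u v
  | .con u v => G.Adj u v ∧ s(u, v) ≠ s(x, y)

/-- `G` is `P`-critical (no terminals): each minor-operation decreases `P`. -/
def Critical (P : SimpleGraph V → ℕ) (G : SimpleGraph V) : Prop :=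
  ∀ μ : MinorOp V, μ.Valid G → P (μ.apply G) < P G

/-- `G` is `P`-critical as a graph with terminals `x, y`. -/
def CriticalT (P : SimpleGraph V → ℕ) (G : SimpleGraph V) (x y : V) : Prop :=
  ∀ μ : MinorOp V, μ.ValidT G x y → P (μ.applyT G x y) < P G

/-- Connectedness of the graph on its non-isolated vertices. -/
def ConnOn (G : SimpleGraph V) : Prop := (G.induce G.support).Connected

/-- `G` is the `xy`-sum of `G₁` and `G₂`: their union, the parts sharing exactly the
two terminals `x, y`, with the edge `xy` absent from both parts. -/
structure IsXYSum (G G₁ G₂ : SimpleGraph V) (x y : V) : Prop where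
  ne : x ≠ y
  eq : G = G₁ ⊔ G₂
  nadj₁ : ¬ G₁.Adj x y
  nadj₂ : ¬ G₂.Adj x y
  inter : ∀ v : V, v ∈ G₁.support → v ∈ G₂.support → v = x ∨ v = y
  x₁ : x ∈ G₁.support
  y₁ : y ∈ G₁.support
  x₂ : x ∈ G₂.support
  y₂ : y ∈ G₂.support

/-- `θ(G) = ĝ⁺(G) − ĝ(G)`. -/
noncomputable def theta (G : SimpleGraph V) (x y : V) : ℕ := egp G x y - eulerGenus G

/-- `η(G₁, G₂) = θ(G₁) + θ(G₂)`. -/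
noncomputable def eta (G₁ G₂ : SimpleGraph V) (x y : V) : ℕ :=
  theta G₁ x y + theta G₂ x y

/-- A cascade: every minor-operation decreases `ĝ` or `ĝ⁺`, but `G` is neither
`ĝ`-critical nor `ĝ⁺`-critical. -/
def Cascade (G : SimpleGraph V) (x y : V) : Prop :=
  ¬ G.Adj x y ∧
  (∀ μ : MinorOp V, μ.ValidT G x y →
      eulerGenus (μ.applyT G x y) < eulerGenus G ∨ egp (μ.applyT G x y) x y < egp G x y) ∧
  ¬ CriticalT eulerGenus G x y ∧ ¬ CriticalT (fun H => egp H x y) G x y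

/-- A weak `ĝ`-hopper. -/
def WeakEgHopper (G : SimpleGraph V) (x y : V) : Prop :=
  ¬ CriticalT (fun H => egp H x y) G x y ∧
  ∀ μ : MinorOp V, μ.ValidT G x y →
    egp (μ.applyT G x y) x y < egp G x y ∨ eulerGenus (μ.applyT G x y) + 2 ≤ eulerGenus G

/-- A weak `ĝ⁺`-hopper. -/
def WeakEgpHopper (G : SimpleGraph V) (x y : V) : Prop :=
  ¬ CriticalT eulerGenus G x y ∧
  ∀ μ : MinorOp V, μ.ValidT G x y →
    eulerGenus (μ.applyT G x y) < eulerGenus G ∨ egp (μ.applyT G x y) x y + 2 ≤ egp G x y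

/-- Deletion-minimal graph of minimum degree ≥ 3 (member of `E*`). -/
def DeletionMinimal (H : SimpleGraph V) : Prop :=
  (∀ v ∈ H.support, 3 ≤ Nat.card {w : V | H.Adj v w}) ∧
  ∀ u v : V, H.Adj u v → eulerGenus (H.deleteEdges {s(u, v)}) < eulerGenus H


/-! ### Auxiliary machinery -/

section Aux

open SimpleGraph

variable {W : Type}

/-- The dart equivalence induced by a graph isomorphism. -/
def isoDartEquiv {G : SimpleGraph V} {G' : SimpleGraph W} (φ : G ≃g G') : G.Dart ≃ G'.Dart where
  toFun d := ⟨(φ d.toProd.1, φ d.toProd.2), φ.map_adj_iff.mpr d.adj⟩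
  invFun d := ⟨(φ.symm d.toProd.1, φ.symm d.toProd.2), φ.symm.map_adj_iff.mpr d.adj⟩
  left_inv d := SimpleGraph.Dart.ext _ _ (by simp)
  right_inv d := SimpleGraph.Dart.ext _ _ (by simp)

lemma isoDartEquiv_symm_dart {G : SimpleGraph V} {G' : SimpleGraph W} (φ : G ≃g G')
    (d : G.Dart) : isoDartEquiv φ d.symm = (isoDartEquiv φ d).symm :=
  SimpleGraph.Dart.ext _ _ rfl

lemma isoDartEquiv_inv_symm_dart {G : SimpleGraph V} {G' : SimpleGraph W} (φ : G ≃g G')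
    (d : G'.Dart) : (isoDartEquiv φ).symm d.symm = ((isoDartEquiv φ).symm d).symm :=
  SimpleGraph.Dart.ext _ _ rfl

lemma permCongr_pow {α β : Type*} (e : α ≃ β) (p : Equiv.Perm α) (n : ℕ) (x : α) :
    ((e.permCongr p) ^ n) (e x) = e ((p ^ n) x) := by
  induction n generalizing x with
  | zero => simp
  | succ n ih =>
    rw [pow_succ, pow_succ, Equiv.Perm.mul_apply, Equiv.Perm.mul_apply,
      Equiv.permCongr_apply, Equiv.symm_apply_apply, ih]

lemma permCongr_symm_eq {α β : Type*} (e : α ≃ β) (p : Equiv.Perm α) :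
    (e.permCongr p).symm = e.permCongr p.symm := by
  ext x
  rw [Equiv.permCongr_apply]
  conv_lhs => rw [show x = (e.permCongr p) (e (p.symm (e.symm x))) by simp]
  rw [Equiv.symm_apply_apply]

/-- Transport of an embedding along a graph isomorphism. -/
noncomputable def Emb.transport {G : SimpleGraph V} {G' : SimpleGraph W} (φ : G ≃g G')
    (E : Emb G) : Emb G' where
  rot := (isoDartEquiv φ).permCongr E.rot
  sign := E.sign ∘ (isoDartEquiv φ).symm
  rot_fst d := by
    have h1 := E.rot_fst ((isoDartEquiv φ).symm d)
    simp only [Equiv.permCongr_apply]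
    show φ ((E.rot ((isoDartEquiv φ).symm d)).toProd.1) = d.toProd.1
    rw [h1]
    show φ (φ.symm d.toProd.1) = d.toProd.1
    simp
  rot_cyclic d d' h := by
    have h2 : ((isoDartEquiv φ).symm d).toProd.1 = ((isoDartEquiv φ).symm d').toProd.1 := by
      show φ.symm d.toProd.1 = φ.symm d'.toProd.1
      rw [h]
    obtain ⟨n, hn⟩ := E.rot_cyclic _ _ h2
    refine ⟨n, ?_⟩
    have := permCongr_pow (isoDartEquiv φ) E.rot n ((isoDartEquiv φ).symm d)
    rw [Equiv.apply_symm_apply] at this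
    rw [this, hn, Equiv.apply_symm_apply]
  sign_symm d := by
    show E.sign ((isoDartEquiv φ).symm d.symm) = E.sign ((isoDartEquiv φ).symm d)
    rw [isoDartEquiv_inv_symm_dart, E.sign_symm]

lemma Emb.transport_faceNext {G : SimpleGraph V} {G' : SimpleGraph W} (φ : G ≃g G')
    (E : Emb G) (d : G.Dart) (b : Bool) :
    (E.transport φ).faceNext ((isoDartEquiv φ) d, b)
      = ((isoDartEquiv φ) (E.faceNext (d, b)).1, (E.faceNext (d, b)).2) := by
  have hsign : (E.transport φ).sign ((isoDartEquiv φ) d) = E.sign d := by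
    show E.sign ((isoDartEquiv φ).symm ((isoDartEquiv φ) d)) = E.sign d
    rw [Equiv.symm_apply_apply]
  unfold Emb.faceNext
  simp only [hsign]
  congr 1
  by_cases hb : xor b (E.sign d)
  · simp only [hb, if_true]
    show ((isoDartEquiv φ).permCongr E.rot) ((isoDartEquiv φ) d).symm
      = (isoDartEquiv φ) (E.rot d.symm)
    rw [← isoDartEquiv_symm_dart, Equiv.permCongr_apply, Equiv.symm_apply_apply]
  · simp only [hb, if_false]
    show ((isoDartEquiv φ).permCongr E.rot).symm ((isoDartEquiv φ) d).symm
      = (isoDartEquiv φ) (E.rot.symm d.symm)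
    rw [← isoDartEquiv_symm_dart, permCongr_symm_eq, Equiv.permCongr_apply,
      Equiv.symm_apply_apply]

lemma Iso.support_iff {G : SimpleGraph V} {G' : SimpleGraph W} (φ : G ≃g G') (v : V) :
    v ∈ G.support ↔ φ v ∈ G'.support := by
  rw [SimpleGraph.mem_support, SimpleGraph.mem_support]
  constructor
  · rintro ⟨w, hw⟩; exact ⟨φ w, φ.map_adj_iff.mpr hw⟩
  · rintro ⟨w, hw⟩
    refine ⟨φ.symm w, ?_⟩
    have := φ.symm.map_adj_iff.mpr hw
    rwa [φ.symm_apply_apply] at this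

/-- The isomorphism of the induced graphs on supports. -/
def Iso.inducedSupport {G : SimpleGraph V} {G' : SimpleGraph W} (φ : G ≃g G') :
    (G.induce G.support) ≃g (G'.induce G'.support) where
  toEquiv := (φ.toEquiv.subtypeEquiv (Iso.support_iff φ))
  map_rel_iff' := by
    intro a b
    simp only [Equiv.subtypeEquiv_apply, SimpleGraph.comap_adj, Function.Embedding.coe_subtype]
    exact φ.map_adj_iff

lemma Emb.transport_genus {G : SimpleGraph V} {G' : SimpleGraph W} (φ : G ≃g G')
    (E : Emb G) : (E.transport φ).genus = E.genus := by
  have h1 : Nat.card (G'.induce G'.support).ConnectedComponent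
      = Nat.card (G.induce G.support).ConnectedComponent :=
    Nat.card_congr (Iso.inducedSupport φ).connectedComponentEquiv.symm
  have h2 : Nat.card G'.support = Nat.card G.support :=
    Nat.card_congr (φ.toEquiv.subtypeEquiv (Iso.support_iff φ)).symm
  have h3 : Nat.card G'.edgeSet = Nat.card G.edgeSet :=
    Nat.card_congr φ.mapEdgeSet.symm
  have h4 : (E.transport φ).faceCount = E.faceCount := by
    unfold Emb.faceCount
    refine Nat.card_congr (Quot.congr ((isoDartEquiv φ).prodCongr (Equiv.refl Bool)) ?_).symm
    intro p q
    obtain ⟨d, b⟩ := p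
    obtain ⟨d', b'⟩ := q
    constructor
    · intro h
      show (E.transport φ).faceNext ((isoDartEquiv φ) d, b) = ((isoDartEquiv φ) d', b')
      rw [Emb.transport_faceNext]
      rw [show E.faceNext (d, b) = (d', b') from h]
    · intro h
      have h' : (E.transport φ).faceNext ((isoDartEquiv φ) d, b) = ((isoDartEquiv φ) d', b') := h
      rw [Emb.transport_faceNext] at h'
      obtain ⟨ha, hb⟩ := Prod.ext_iff.mp h'
      exact Prod.ext ((isoDartEquiv φ).injective ha) hb
  unfold Emb.genus
  rw [h1, h2, h3, h4]

lemma eulerGenus_iso {G : SimpleGraph V} {G' : SimpleGraph W} (φ : G ≃g G') :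
    eulerGenus G = eulerGenus G' := by
  unfold eulerGenus
  congr 1
  ext n
  constructor
  · rintro ⟨E, hE⟩; exact ⟨E.transport φ, by rw [Emb.transport_genus]; exact hE⟩
  · rintro ⟨E, hE⟩; exact ⟨E.transport φ.symm, by rw [Emb.transport_genus]; exact hE⟩

/-- Pushing a graph along a permutation. -/
def isoMap (σ : V ≃ V) (G : SimpleGraph V) : G ≃g G.map σ.toEmbedding where
  toEquiv := σ
  map_rel_iff' := by
    intro a b
    simp only [SimpleGraph.map_adj, Equiv.toEmbedding_apply]
    constructor
    · rintro ⟨a', b', h, ha, hb⟩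
      rwa [σ.injective ha, σ.injective hb] at h
    · intro h; exact ⟨a, b, h, rfl, rfl⟩

lemma eulerGenus_map (σ : V ≃ V) (G : SimpleGraph V) :
    eulerGenus (G.map σ.toEmbedding) = eulerGenus G :=
  (eulerGenus_iso (isoMap σ G)).symm

lemma addEdge_adj (G : SimpleGraph V) (x y a b : V) :
    (addEdge G x y).Adj a b ↔ G.Adj a b ∨ (s(a, b) = s(x, y) ∧ a ≠ b) := by
  simp only [addEdge, SimpleGraph.sup_adj, SimpleGraph.fromEdgeSet_adj, Set.mem_singleton_iff]

lemma swap_ite (u v w : V) :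
    Equiv.swap u v (if w = v then u else w) = (if w = u then v else w) := by
  by_cases h1 : w = v
  · subst h1
    rw [if_pos rfl, Equiv.swap_apply_left]
    by_cases h2 : w = u
    · rw [if_pos h2]
    · rw [if_neg h2]
  · rw [if_neg h1]
    by_cases h2 : w = u
    · subst h2; rw [if_pos rfl, Equiv.swap_apply_left]
    · rw [if_neg h2, Equiv.swap_apply_of_ne_of_ne h2 h1]

lemma swap_ite' (u v w : V) :
    Equiv.swap u v (if w = u then v else w) = (if w = v then u else w) := by
  rw [Equiv.swap_comm]; exact swap_ite v u w

/-- Swapping the roles of the two identified vertices gives an isomorphic graph. -/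
lemma contractPair_swap (H : SimpleGraph V) (u v : V) :
    (contractPair H u v).map (Equiv.swap u v).toEmbedding = contractPair H v u := by
  ext a b
  simp only [SimpleGraph.map_adj, Equiv.toEmbedding_apply]
  constructor
  · rintro ⟨a₀, b₀, ⟨hne, a', b', ha, hb, h⟩, rfl, rfl⟩
    refine ⟨(Equiv.swap u v).injective.ne hne, a', b', ?_, ?_, h⟩
    · rw [← ha, swap_ite]
    · rw [← hb, swap_ite]
  · rintro ⟨hne, a', b', ha, hb, h⟩
    refine ⟨Equiv.swap u v a, Equiv.swap u v b,
      ⟨(Equiv.swap u v).injective.ne hne, a', b', ?_, ?_, h⟩, ?_, ?_⟩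
    · rw [← ha, swap_ite']
    · rw [← hb, swap_ite']
    · exact Equiv.swap_apply_self _ _ _
    · exact Equiv.swap_apply_self _ _ _

lemma eulerGenus_contractPair_comm (H : SimpleGraph V) (u v : V) :
    eulerGenus (contractPair H u v) = eulerGenus (contractPair H v u) := by
  rw [← contractPair_swap H u v, eulerGenus_map]

lemma addEdge_deleteEdges (G : SimpleGraph V) (x y : V) (hnadj : ¬ G.Adj x y) :
    (addEdge G x y).deleteEdges {s(x, y)} = G := by
  ext a b
  simp only [SimpleGraph.deleteEdges_adj, addEdge_adj, Set.mem_singleton_iff]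
  constructor
  · rintro ⟨h | ⟨hs, hne⟩, hns⟩
    · exact h
    · exact absurd hs hns
  · intro h
    refine ⟨Or.inl h, fun hs => ?_⟩
    rcases Sym2.eq_iff.mp hs with ⟨rfl, rfl⟩ | ⟨rfl, rfl⟩
    · exact hnadj h
    · exact hnadj h.symm

lemma addEdge_deleteEdges_comm (G : SimpleGraph V) (x y u v : V)
    (hs : s(u, v) ≠ s(x, y)) :
    (addEdge G x y).deleteEdges {s(u, v)} = addEdge (G.deleteEdges {s(u, v)}) x y := by
  ext a b
  simp only [SimpleGraph.deleteEdges_adj, addEdge_adj, Set.mem_singleton_iff]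
  constructor
  · rintro ⟨h | ⟨hsab, hne⟩, hns⟩
    · exact Or.inl ⟨h, hns⟩
    · exact Or.inr ⟨hsab, hne⟩
  · rintro (⟨h, hns⟩ | ⟨hsab, hne⟩)
    · exact ⟨Or.inl h, hns⟩
    · exact ⟨Or.inr ⟨hsab, hne⟩, fun hc => hs (hc ▸ hsab ▸ rfl)⟩

lemma contractPair_addEdge_self (G : SimpleGraph V) (x y : V) :
    contractPair (addEdge G x y) x y = contractPair G x y := by
  ext a b
  simp only [contractPair, addEdge_adj]
  constructor
  · rintro ⟨hab, a', b', ha, hb, h | ⟨hs, hne⟩⟩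
    · exact ⟨hab, a', b', ha, hb, h⟩
    · exfalso
      rcases Sym2.eq_iff.mp hs with ⟨rfl, rfl⟩ | ⟨rfl, rfl⟩
      · apply hab
        rw [← ha, ← hb, if_pos rfl]
        by_cases hxy : a' = b'
        · rw [if_pos hxy]
        · rw [if_neg hxy]
      · apply hab
        rw [← ha, ← hb, if_pos rfl]
        by_cases hxy : b' = a'
        · rw [if_pos hxy]
        · rw [if_neg hxy]
  · rintro ⟨hab, a', b', ha, hb, h⟩
    exact ⟨hab, a', b', ha, hb, Or.inl h⟩

lemma contractPair_addEdge_comm (G : SimpleGraph V) (x y u v : V) (hxy : x ≠ y)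
    (hvx : v ≠ x) (hvy : v ≠ y) :
    contractPair (addEdge G x y) u v = addEdge (contractPair G u v) x y := by
  ext a b
  simp only [contractPair, addEdge_adj]
  constructor
  · rintro ⟨hab, a', b', ha, hb, h | ⟨hs, hne⟩⟩
    · exact Or.inl ⟨hab, a', b', ha, hb, h⟩
    · refine Or.inr ⟨?_, hab⟩
      rcases Sym2.eq_iff.mp hs with ⟨rfl, rfl⟩ | ⟨rfl, rfl⟩
      · rw [← ha, ← hb, if_neg (fun h => hvx h.symm), if_neg (fun h => hvy h.symm)]
      · rw [← ha, ← hb, if_neg (fun h => hvy h.symm), if_neg (fun h => hvx h.symm)]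
        exact Sym2.eq_swap
  · rintro (⟨hab, a', b', ha, hb, h⟩ | ⟨hs, hab⟩)
    · exact ⟨hab, a', b', ha, hb, Or.inl h⟩
    · refine ⟨hab, a, b, ?_, ?_, Or.inr ⟨hs, hab⟩⟩
      · rcases Sym2.eq_iff.mp hs with ⟨rfl, _⟩ | ⟨rfl, _⟩
        · rw [if_neg (fun h => hvx h.symm)]
        · rw [if_neg (fun h => hvy h.symm)]
      · rcases Sym2.eq_iff.mp hs with ⟨_, rfl⟩ | ⟨_, rfl⟩
        · rw [if_neg (fun h => hvy h.symm)]
        · rw [if_neg (fun h => hvx h.symm)]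

lemma adj_addEdge_of_adj {G : SimpleGraph V} {x y a b : V} (h : G.Adj a b) :
    (addEdge G x y).Adj a b := (addEdge_adj G x y a b).mpr (Or.inl h)

lemma addEdge_adj_self (G : SimpleGraph V) {x y : V} (hxy : x ≠ y) :
    (addEdge G x y).Adj x y := (addEdge_adj G x y x y).mpr (Or.inr ⟨rfl, hxy⟩)

lemma adj_of_addEdge_adj {G : SimpleGraph V} {x y a b : V}
    (h : (addEdge G x y).Adj a b) (hs : s(a, b) ≠ s(x, y)) : G.Adj a b := by
  rcases (addEdge_adj G x y a b).mp h with h' | ⟨hs', _⟩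
  · exact h'
  · exact absurd hs' hs

end Aux

/-- The underlying unlabeled graph of `G⁺` is critical for Euler genus iff `G` is
`ĝ⁺`-critical, `θ(G) > 0`, and `ĝ(G/xy) < ĝ⁺(G)`. -/
theorem gplus_critical_iff {V : Type} [Fintype V] (G : SimpleGraph V) (x y : V)
    (hxy : x ≠ y) (hnadj : ¬ G.Adj x y) :
    Critical eulerGenus (addEdge G x y) ↔
      (CriticalT (fun H => egp H x y) G x y ∧ eulerGenus G < egp G x y ∧
        eulerGenus (contractPair G x y) < egp G x y) := by
  constructor
  · intro hcrit
    refine ⟨?_, ?_, ?_⟩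
    · -- CriticalT for egp
      intro μ hμ
      match μ with
      | .del u v =>
        have hadj : G.Adj u v := hμ
        have hs : s(u, v) ≠ s(x, y) := by
          intro hs
          rcases Sym2.eq_iff.mp hs with ⟨rfl, rfl⟩ | ⟨rfl, rfl⟩
          · exact hnadj hadj
          · exact hnadj hadj.symm
        have := hcrit (.del u v) (adj_addEdge_of_adj hadj)
        simp only [MinorOp.apply] at this
        rw [addEdge_deleteEdges_comm G x y u v hs] at this
        exact this
      | .con u v =>
        obtain ⟨hadj, hs⟩ := hμ
        by_cases hvx : v = x
        · rw [hvx] at hadj hs ⊢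
          have hux : u ≠ x := fun h => (h ▸ hadj).ne rfl
          have huy : u ≠ y := by
            intro h; subst h
            exact hs (Sym2.eq_swap)
          have hvalid : (addEdge G x y).Adj x u := (adj_addEdge_of_adj hadj).symm
          have := hcrit (.con x u) hvalid
          simp only [MinorOp.apply] at this
          rw [contractPair_addEdge_comm G x y x u hxy hux huy] at this
          simp only [MinorOp.applyT, eq_self_iff_true, true_or, if_true]
          exact this
        · by_cases hvy : v = y
          · rw [hvy] at hadj hs ⊢
            have huy : u ≠ y := fun h => (h ▸ hadj).ne rfl
            have hux : u ≠ x := by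
              intro h; subst h
              exact hs rfl
            have hvalid : (addEdge G x y).Adj y u := (adj_addEdge_of_adj hadj).symm
            have := hcrit (.con y u) hvalid
            simp only [MinorOp.apply] at this
            rw [contractPair_addEdge_comm G x y y u hxy hux huy] at this
            simp only [MinorOp.applyT, eq_self_iff_true, or_true, if_true]
            exact this
          · have hvalid : (addEdge G x y).Adj u v := adj_addEdge_of_adj hadj
            have := hcrit (.con u v) hvalid
            simp only [MinorOp.apply] at this
            rw [contractPair_addEdge_comm G x y u v hxy hvx hvy] at this
            simp only [MinorOp.applyT, if_neg (by tauto : ¬ (v = x ∨ v = y))]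
            exact this
    · -- eulerGenus G < egp G
      have := hcrit (.del x y) (addEdge_adj_self G hxy)
      simp only [MinorOp.apply] at this
      rw [addEdge_deleteEdges G x y hnadj] at this
      exact this
    · -- eulerGenus (G/xy) < egp G
      have := hcrit (.con x y) (addEdge_adj_self G hxy)
      simp only [MinorOp.apply] at this
      rw [contractPair_addEdge_self G x y] at this
      exact this
  · rintro ⟨hcrit, hθ, hcon⟩
    intro μ hμ
    match μ with
    | .del u v =>
      have hadj : (addEdge G x y).Adj u v := hμ
      by_cases hs : s(u, v) = s(x, y)
      · simp only [MinorOp.apply]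
        have : ({s(u, v)} : Set (Sym2 V)) = {s(x, y)} := by rw [hs]
        rw [this, addEdge_deleteEdges G x y hnadj]
        exact hθ
      · have hGadj : G.Adj u v := adj_of_addEdge_adj hadj hs
        have := hcrit (.del u v) hGadj
        simp only [MinorOp.applyT] at this
        simp only [MinorOp.apply]
        rw [addEdge_deleteEdges_comm G x y u v hs]
        exact this
    | .con u v =>
      have hadj : (addEdge G x y).Adj u v := hμ
      simp only [MinorOp.apply]
      by_cases hs : s(u, v) = s(x, y)
      · rcases Sym2.eq_iff.mp hs with ⟨rfl, rfl⟩ | ⟨rfl, rfl⟩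
        · rw [contractPair_addEdge_self G u v]
          exact hcon
        · rw [eulerGenus_contractPair_comm, contractPair_addEdge_self G v u]
          exact hcon
      · have hGadj : G.Adj u v := adj_of_addEdge_adj hadj hs
        by_cases hvx : v = x
        · rw [hvx] at hGadj hs ⊢
          have hux : u ≠ x := fun h => (h ▸ hGadj).ne rfl
          have huy : u ≠ y := by
            intro h; subst h
            exact hs Sym2.eq_swap
          have hvalidT : (MinorOp.con x u).ValidT G x y := by
            refine ⟨hGadj.symm, fun h => ?_⟩
            rcases Sym2.eq_iff.mp h with ⟨_, h2⟩ | ⟨h1, _⟩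
            · exact huy h2
            · exact hxy h1
          have := hcrit (.con x u) hvalidT
          simp only [MinorOp.applyT, if_neg (show ¬ (u = x ∨ u = y) by tauto)] at this
          rw [eulerGenus_contractPair_comm, contractPair_addEdge_comm G x y x u hxy hux huy]
          exact this
        · by_cases hvy : v = y
          · rw [hvy] at hGadj hs ⊢
            have huy : u ≠ y := fun h => (h ▸ hGadj).ne rfl
            have hux : u ≠ x := by
              intro h; subst h
              exact hs rfl
            have hvalidT : (MinorOp.con y u).ValidT G x y := by
              refine ⟨hGadj.symm, fun h => ?_⟩
              rcases Sym2.eq_iff.mp h with ⟨h1, _⟩ | ⟨_, h2⟩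
              · exact hxy h1.symm
              · exact hux h2
            have := hcrit (.con y u) hvalidT
            simp only [MinorOp.applyT, if_neg (show ¬ (u = x ∨ u = y) by tauto)] at this
            rw [eulerGenus_contractPair_comm, contractPair_addEdge_comm G x y y u hxy hux huy]
            exact this
          · have hvalidT : (MinorOp.con u v).ValidT G x y := ⟨hGadj, hs⟩
            have := hcrit (.con u v) hvalidT
            simp only [MinorOp.applyT, if_neg (show ¬ (v = x ∨ v = y) by tauto)] at this
            rw [contractPair_addEdge_comm G x y u v hxy hvx hvy]
            exact this

end GenusPaper
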